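/- Let p, q be distributions on [k] with p_i + q_i > 0 for all i, let ℓ ≥ 1, and let A := {(Tp, Tq) : T ∈ T_{ℓ,k}}. Let g : ℝ^ℓ × ℝ^ℓ → ℝ be quasiconvex on A, i.e., for every t ∈ ℝ the sublevel set {z ∈ A : g(z) ≤ t} is convex. Then sup over T ∈ T_{ℓ,k} of g(Tp, Tq) equals the maximum over threshold channels T ∈ T^thresh_{ℓ,k} of g(Tp, Tq); in particular the supremum is attained by a threshold channel. -/

import Mathlib

open scoped Classical ENNReal
open Finset

noncomputable section

/-- `p` is a probability distribution on `Fin k`. -/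
def IsDist {k : ℕ} (p : Fin k → ℝ) : Prop :=
  (∀ i, 0 ≤ p i) ∧ ∑ i, p i = 1

/-- `T` is a channel from `[k]` to `[ℓ]`: nonnegative entries, columns sum to 1. -/
def IsChannel {ℓ k : ℕ} (T : Matrix (Fin ℓ) (Fin k) ℝ) : Prop :=
  (∀ r c, 0 ≤ T r c) ∧ ∀ c, ∑ r, T r c = 1

/-- Squared Hellinger divergence `d_h²(p,q) = Σ_i (√p_i − √q_i)²`. -/
def hellingerSq {k : ℕ} (p q : Fin k → ℝ) : ℝ :=
  ∑ i, (Real.sqrt (p i) - Real.sqrt (q i)) ^ 2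

/-- Total variation distance `d_TV(p,q) = (1/2) Σ_i |p_i − q_i|`. -/
def tvDist {k : ℕ} (p q : Fin k → ℝ) : ℝ :=
  (1 / 2) * ∑ i, |p i - q i|

/-- `T` is an `ε`-LDP channel: `T(r,c) ≤ e^ε T(r,c')` for all rows `r`, columns `c, c'`. -/
def IsLDP {ℓ k : ℕ} (ε : ℝ) (T : Matrix (Fin ℓ) (Fin k) ℝ) : Prop :=
  IsChannel T ∧ ∀ r c c', T r c ≤ Real.exp ε * T r c'

/-- The deterministic channel induced by a map `f : [k] → [ℓ]`. -/
def detChannel {k ℓ : ℕ} (f : Fin k → Fin ℓ) : Matrix (Fin ℓ) (Fin k) ℝ :=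
  fun r c => if r = f c then 1 else 0

/-- Likelihood ratio `p_i / q_i`, taken to be `+∞` when `q_i = 0`. -/
def lr {k : ℕ} (p q : Fin k → ℝ) (i : Fin k) : EReal :=
  if q i = 0 then ⊤ else ((p i / q i : ℝ) : EReal)

/-- `T` is a threshold channel for `(p, q)`: it is deterministic, induced by a map `f`,
and whenever `p_u/q_u < p_v/q_v` and `f u = f v`, every `w` whose likelihood ratio lies
strictly between those of `u` and `v` satisfies `f w = f u`. -/
def IsThresholdChannel {k ℓ : ℕ} (p q : Fin k → ℝ) (T : Matrix (Fin ℓ) (Fin k) ℝ) : Prop :=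
  ∃ f : Fin k → Fin ℓ, T = detChannel f ∧
    ∀ u v w : Fin k, lr p q u < lr p q v → f u = f v →
      lr p q u < lr p q w → lr p q w < lr p q v → f w = f u

/-! ### Auxiliary lemmas -/

lemma lr_lt_iff' {k : ℕ} {p q : Fin k → ℝ} (hq : ∀ i, 0 ≤ q i)
    (hpq : ∀ i, 0 < p i + q i) (i j : Fin k) :
    lr p q i < lr p q j ↔ p i * q j < p j * q i := by
  unfold lr
  rcases eq_or_ne (q i) 0 with hi | hi <;> rcases eq_or_ne (q j) 0 with hj | hj
  · simp [hi, hj]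
  · have hqj : 0 < q j := lt_of_le_of_ne (hq j) (Ne.symm hj)
    have hpi : 0 < p i := by have := hpq i; rw [hi] at this; linarith
    simp only [hi, hj, if_true, if_neg hj]
    constructor
    · intro h; exact absurd h (by simp)
    · intro h; nlinarith
  · have hqi : 0 < q i := lt_of_le_of_ne (hq i) (Ne.symm hi)
    have hpj : 0 < p j := by have := hpq j; rw [hj] at this; linarith
    simp only [hi, hj, if_neg hi, if_true]
    constructor
    · intro _; nlinarith
    · intro _; exact EReal.coe_lt_top _
  · have hqi : 0 < q i := lt_of_le_of_ne (hq i) (Ne.symm hi)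
    have hqj : 0 < q j := lt_of_le_of_ne (hq j) (Ne.symm hj)
    simp only [if_neg hi, if_neg hj, EReal.coe_lt_coe_iff]
    exact div_lt_div_iff₀ hqi hqj

lemma cone' {k : ℕ} {p q : Fin k → ℝ} (hq : ∀ i, 0 ≤ q i)
    (hpq : ∀ i, 0 < p i + q i) {u w v : Fin k}
    (huw : lr p q u < lr p q w) (hwv : lr p q w < lr p q v) :
    ∃ α β : ℝ, 0 < α ∧ 0 < β ∧ p w = α * p u + β * p v ∧ q w = α * q u + β * q v := by
  have huv := lt_trans huw hwv
  rw [lr_lt_iff' hq hpq] at huw hwv huv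
  have hD : p u * q v - p v * q u < 0 := by linarith
  have hDne : p u * q v - p v * q u ≠ 0 := ne_of_lt hD
  refine ⟨(p w * q v - p v * q w) / (p u * q v - p v * q u),
          (p u * q w - p w * q u) / (p u * q v - p v * q u), ?_, ?_, ?_, ?_⟩
  · apply div_pos_of_neg_of_neg <;> linarith
  · apply div_pos_of_neg_of_neg <;> linarith
  · rw [div_mul_eq_mul_div, div_mul_eq_mul_div, ← add_div, eq_div_iff hDne]; ring
  · rw [div_mul_eq_mul_div, div_mul_eq_mul_div, ← add_div, eq_div_iff hDne]; ring

lemma exists_threshold_argmax {k ℓ : ℕ} (hℓ : 1 ≤ ℓ) {p q : Fin k → ℝ}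
    (hq : ∀ i, 0 ≤ q i) (hpq : ∀ i, 0 < p i + q i)
    (AA BB : Fin ℓ → ℝ) :
    ∃ f : Fin k → Fin ℓ,
      (∀ u v w : Fin k, lr p q u < lr p q v → f u = f v →
        lr p q u < lr p q w → lr p q w < lr p q v → f w = f u) ∧
      (∀ i r, p i * AA r + q i * BB r ≤ p i * AA (f i) + q i * BB (f i)) := by
  haveI : Nonempty (Fin ℓ) := ⟨⟨0, hℓ⟩⟩
  set H : Fin ℓ → Fin k → ℝ := fun r i => p i * AA r + q i * BB r with hH
  have hne : ∀ i : Fin k, (Finset.univ.filter (fun r => ∀ r', H r' i ≤ H r i)).Nonempty := by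
    intro i
    obtain ⟨r, -, hr⟩ := Finset.exists_max_image Finset.univ (fun r => H r i) Finset.univ_nonempty
    exact ⟨r, Finset.mem_filter.2 ⟨Finset.mem_univ r, fun r' => hr r' (Finset.mem_univ r')⟩⟩
  set f : Fin k → Fin ℓ :=
    fun i => (Finset.univ.filter (fun r => ∀ r', H r' i ≤ H r i)).min' (hne i) with hf
  have hmem : ∀ i, ∀ r', H r' i ≤ H (f i) i := by
    intro i
    have := Finset.min'_mem _ (hne i)
    exact (Finset.mem_filter.1 this).2
  have hmin : ∀ i r, (∀ r', H r' i ≤ H r i) → f i ≤ r := by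
    intro i r hr
    exact Finset.min'_le _ r (Finset.mem_filter.2 ⟨Finset.mem_univ r, hr⟩)
  refine ⟨f, ?_, fun i r => hmem i r⟩
  intro u v w huv hfuv huw hwv
  obtain ⟨α, β, hα, hβ, hpw, hqw⟩ := cone' hq hpq huw hwv
  have hHw : ∀ s, H s w = α * H s u + β * H s v := by
    intro s; simp only [hH, hpw, hqw]; ring
  set r := f u with hr
  have hrw : ∀ s, H s w ≤ H r w := by
    intro s
    rw [hHw s, hHw r]
    have h1 := hmem u s
    have h2 : H s v ≤ H r v := by rw [hfuv]; exact hmem v s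
    nlinarith
  set r' := f w with hr'
  have h1 : H r w ≤ H r' w := hmem w r
  have h2 : H r' w ≤ H r w := hrw r'
  have heq : H r' w = H r w := le_antisymm h2 h1
  have hru : H r' u = H r u := by
    rw [hHw r', hHw r] at heq
    have h3 : H r' u ≤ H r u := hmem u r'
    have h4 : H r' v ≤ H r v := by rw [hfuv]; exact hmem v r'
    nlinarith
  have hr'argu : ∀ s, H s u ≤ H r' u := by intro s; rw [hru]; exact hmem u s
  have hle1 : r ≤ r' := hmin u r' hr'argu
  have hle2 : r' ≤ r := hmin w r hrw
  omega

lemma detChannel_isChannel {k ℓ : ℕ} (f : Fin k → Fin ℓ) :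
    IsChannel (detChannel f) := by
  constructor
  · intro r c; unfold detChannel; split <;> norm_num
  · intro c; simp [detChannel]

lemma expand_channel {k ℓ : ℕ} (p q : Fin k → ℝ) (T : Matrix (Fin ℓ) (Fin k) ℝ) :
    ((T.mulVec p, T.mulVec q) : (Fin ℓ → ℝ) × (Fin ℓ → ℝ)) =
      ∑ i, ∑ r, T r i • ((p i • (Pi.single r 1 : Fin ℓ → ℝ),
        q i • (Pi.single r 1 : Fin ℓ → ℝ)) : (Fin ℓ → ℝ) × (Fin ℓ → ℝ)) := by
  apply Prod.ext <;>
  · simp only [Prod.fst_sum, Prod.snd_sum, Prod.smul_fst, Prod.smul_snd]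
    funext s
    simp only [Finset.sum_apply, Pi.smul_apply, Pi.single_apply, smul_eq_mul,
      Matrix.mulVec, dotProduct, mul_ite, mul_one, mul_zero, Finset.sum_ite_eq]
    simp [mul_comm]

/-- Threshold channels maximize quasi-convex functions over the joint range of channels. -/
theorem stmt9 (k ℓ : ℕ) (hℓ : 1 ≤ ℓ) (p q : Fin k → ℝ)
    (hp : IsDist p) (hq : IsDist q) (hpq : ∀ i, 0 < p i + q i)
    (A : Set ((Fin ℓ → ℝ) × (Fin ℓ → ℝ)))
    (hA : A = {z | ∃ T : Matrix (Fin ℓ) (Fin k) ℝ,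
        IsChannel T ∧ z = (T.mulVec p, T.mulVec q)})
    (g : (Fin ℓ → ℝ) × (Fin ℓ → ℝ) → ℝ)
    (hg : ∀ t : ℝ, Convex ℝ {z | z ∈ A ∧ g z ≤ t}) :
    ∃ T₀ : Matrix (Fin ℓ) (Fin k) ℝ,
      IsThresholdChannel p q T₀ ∧ IsChannel T₀ ∧
      (∀ T : Matrix (Fin ℓ) (Fin k) ℝ, IsChannel T →
        g (T.mulVec p, T.mulVec q) ≤ g (T₀.mulVec p, T₀.mulVec q)) ∧
      sSup {x : ℝ | ∃ T : Matrix (Fin ℓ) (Fin k) ℝ,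
          IsChannel T ∧ x = g (T.mulVec p, T.mulVec q)} =
        g (T₀.mulVec p, T₀.mulVec q) := by
  haveI : Nonempty (Fin ℓ) := ⟨⟨0, hℓ⟩⟩
  set pt : (Fin k → Fin ℓ) → (Fin ℓ → ℝ) × (Fin ℓ → ℝ) :=
    fun f => ((detChannel f).mulVec p, (detChannel f).mulVec q) with hpt
  set ThrProp : (Fin k → Fin ℓ) → Prop := fun f =>
    ∀ u v w : Fin k, lr p q u < lr p q v → f u = f v →
      lr p q u < lr p q w → lr p q w < lr p q v → f w = f u with hThrProp
  set ThrSet : Finset (Fin k → Fin ℓ) := Finset.univ.filter ThrProp with hThrSet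
  have hconst : (fun _ : Fin k => (⟨0, hℓ⟩ : Fin ℓ)) ∈ ThrSet := by
    refine Finset.mem_filter.2 ⟨Finset.mem_univ _, ?_⟩
    intro u v w _ _ _ _; rfl
  obtain ⟨f₀, hf₀mem, hf₀max⟩ :=
    Finset.exists_max_image ThrSet (fun f => g (pt f)) ⟨_, hconst⟩
  set K : Set ((Fin ℓ → ℝ) × (Fin ℓ → ℝ)) := convexHull ℝ (↑(ThrSet.image pt)) with hK
  -- every channel's joint point lies in the convex hull of threshold points
  have hKmem : ∀ T : Matrix (Fin ℓ) (Fin k) ℝ, IsChannel T →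
      ((T.mulVec p, T.mulVec q) ) ∈ K := by
    intro T hT
    by_contra hz
    obtain ⟨φ, u0, hsep1, hsep2⟩ :=
      geometric_hahn_banach_closed_point (convex_convexHull ℝ _)
        ((Set.Finite.isCompact_convexHull ℝ (Finset.finite_toSet _)).isClosed) hz
    obtain ⟨f₁, hf₁thr, hf₁max⟩ := exists_threshold_argmax hℓ hq.1 hpq
      (fun r => φ ((Pi.single r 1 : Fin ℓ → ℝ), 0))
      (fun r => φ (0, (Pi.single r 1 : Fin ℓ → ℝ)))
    set H : Fin ℓ → Fin k → ℝ := fun r i =>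
      p i * φ ((Pi.single r 1 : Fin ℓ → ℝ), 0) + q i * φ (0, (Pi.single r 1 : Fin ℓ → ℝ))
      with hHdef
    have hval : ∀ S : Matrix (Fin ℓ) (Fin k) ℝ,
        φ ((S.mulVec p, S.mulVec q) ) = ∑ i, ∑ r, S r i * H r i := by
      intro S
      rw [expand_channel p q S, map_sum]
      refine Finset.sum_congr rfl fun i _ => ?_
      rw [map_sum]
      refine Finset.sum_congr rfl fun r _ => ?_
      have hsplit : ((p i • (Pi.single r 1 : Fin ℓ → ℝ),
          q i • (Pi.single r 1 : Fin ℓ → ℝ)) : (Fin ℓ → ℝ) × (Fin ℓ → ℝ))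
          = p i • (((Pi.single r 1 : Fin ℓ → ℝ), 0) : (Fin ℓ → ℝ) × (Fin ℓ → ℝ))
            + q i • ((0, (Pi.single r 1 : Fin ℓ → ℝ)) : (Fin ℓ → ℝ) × (Fin ℓ → ℝ)) := by
        apply Prod.ext <;> simp
      rw [map_smul, hsplit, map_add, map_smul, map_smul]
      simp [hHdef, smul_eq_mul, mul_add]
    have hptval : φ (pt f₁) = ∑ i, H (f₁ i) i := by
      rw [hpt, hval]
      refine Finset.sum_congr rfl fun i _ => ?_
      simp [detChannel, ite_mul]
    have hbound : φ ((T.mulVec p, T.mulVec q) ) ≤ φ (pt f₁) := by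
      rw [hval T, hptval]
      refine Finset.sum_le_sum fun i _ => ?_
      calc ∑ r, T r i * H r i
          ≤ ∑ r, T r i * H (f₁ i) i :=
            Finset.sum_le_sum fun r _ =>
              mul_le_mul_of_nonneg_left (hf₁max i r) (hT.1 r i)
        _ = (∑ r, T r i) * H (f₁ i) i := by rw [Finset.sum_mul]
        _ = H (f₁ i) i := by rw [hT.2 i, one_mul]
    have hptK : pt f₁ ∈ K := by
      apply subset_convexHull
      exact Finset.mem_coe.2 (Finset.mem_image.2 ⟨f₁,
        Finset.mem_filter.2 ⟨Finset.mem_univ _, hf₁thr⟩, rfl⟩)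
    have := hsep1 _ hptK
    linarith
  -- the sublevel set at the max threshold value contains K
  set t : ℝ := g (pt f₀) with ht
  have hsub : K ⊆ {z | z ∈ A ∧ g z ≤ t} := by
    apply convexHull_min _ (hg t)
    rintro z hz
    obtain ⟨f, hfmem, rfl⟩ := Finset.mem_image.1 (Finset.mem_coe.1 hz)
    constructor
    · rw [hA]; exact ⟨detChannel f, detChannel_isChannel f, rfl⟩
    · exact hf₀max f hfmem
  have hmain : ∀ T : Matrix (Fin ℓ) (Fin k) ℝ, IsChannel T →
      g (T.mulVec p, T.mulVec q) ≤ g ((detChannel f₀).mulVec p, (detChannel f₀).mulVec q) :=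
    fun T hT => (hsub (hKmem T hT)).2
  refine ⟨detChannel f₀, ⟨f₀, rfl, (Finset.mem_filter.1 hf₀mem).2⟩,
    detChannel_isChannel f₀, hmain, ?_⟩
  apply IsGreatest.csSup_eq
  constructor
  · exact ⟨detChannel f₀, detChannel_isChannel f₀, rfl⟩
  · rintro x ⟨T, hT, rfl⟩
    exact hmain T hT
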